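/- Let H be a complex Hilbert space, let A be a bounded self-adjoint operator on H, and let Θ be a bounded operator on H; for s ∈ ℝ write cos(sA) := (exp(isA) + exp(-isA))/2, where exp denotes the exponential in the Banach algebra of bounded operators on H. Let ψ : ℝ → ℂ be a Schwartz function, let c > 0, let φ : ℝ → ℂ be a bounded continuous function with support contained in [−2c, 2c], and for ε ∈ (0,1] define the bounded operator T_ε := ∫_ℝ φ(s) ε^{-1} ψ(s/ε) cos(sA) ds (Bochner integral). Then for all ε ∈ (0,1], ‖Θ ∘ T_ε − T_ε ∘ Θ‖ ≤ (1/2) · ‖A²Θ − ΘA²‖ · (sup_{s∈ℝ} |φ(s)|) · (∫_ℝ σ² |ψ(σ)| dσ) · ε². -/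

import Mathlib

open MeasureTheory Filter Topology

set_option synthInstance.maxHeartbeats 1000000
set_option maxHeartbeats 2000000

/-- The operator cosine family `cos (s A) = (exp (i s A) + exp (-i s A)) / 2` of a bounded
operator `A` on a complex Hilbert space. -/
noncomputable def opCos {H : Type*} [NormedAddCommGroup H] [InnerProductSpace ℂ H]
    [CompleteSpace H] (A : H →L[ℂ] H) (s : ℝ) : H →L[ℂ] H :=
  (2 : ℂ)⁻¹ • (NormedSpace.exp (((s : ℂ) * Complex.I) • A) +
    NormedSpace.exp ((-(s : ℂ) * Complex.I) • A))

/-- The regularization operator `T_ε = ∫ φ(s) ε⁻¹ ψ(s/ε) cos (s A) ds` obtained by pairing the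
operator cosine family of `A` against the cutoff `φ` and the scaled profile `ε⁻¹ ψ(·/ε)`. -/
noncomputable def regOp {H : Type*} [NormedAddCommGroup H] [InnerProductSpace ℂ H]
    [CompleteSpace H] (A : H →L[ℂ] H) (φ : ℝ → ℂ) (ψ : ℝ → ℂ) (ε : ℝ) : H →L[ℂ] H :=
  ∫ s : ℝ, (φ s * (ε : ℂ)⁻¹ * ψ (s / ε)) • opCos A s

namespace Stmt7Aux

variable {H : Type*} [NormedAddCommGroup H] [InnerProductSpace ℂ H] [CompleteSpace H]

/-- `i A`. -/
noncomputable def B (A : H →L[ℂ] H) : H →L[ℂ] H := Complex.I • A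

/-- `exp (i s A)` with real parameter. -/
noncomputable def E (A : H →L[ℂ] H) (s : ℝ) : H →L[ℂ] H := NormedSpace.exp (s • B A)

lemma exp_eq (A : H →L[ℂ] H) (s : ℝ) :
    NormedSpace.exp (((s : ℂ) * Complex.I) • A) = E A s := by
  rw [E]
  congr 1
  rw [B, ← Complex.coe_smul, smul_smul]

lemma exp_eq' (A : H →L[ℂ] H) (s : ℝ) :
    NormedSpace.exp ((-(s : ℂ) * Complex.I) • A) = E A (-s) := by
  rw [← exp_eq A (-s)]
  push_cast
  ring_nf

lemma opCos_eq (A : H →L[ℂ] H) (s : ℝ) :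
    opCos A s = (2 : ℂ)⁻¹ • (E A s + E A (-s)) := by
  rw [opCos, exp_eq, exp_eq']

lemma opCos_neg (A : H →L[ℂ] H) (s : ℝ) : opCos A (-s) = opCos A s := by
  rw [opCos_eq, opCos_eq, neg_neg, add_comm]

lemma hasDerivAt_E (A : H →L[ℂ] H) (t : ℝ) :
    HasDerivAt (E A) (E A t * B A) t :=
  hasDerivAt_exp_smul_const (B A) t

lemma continuous_E (A : H →L[ℂ] H) : Continuous (E A) :=
  continuous_iff_continuousAt.2 fun t => (hasDerivAt_E A t).continuousAt

lemma hasDerivAt_E_neg (A : H →L[ℂ] H) (t : ℝ) :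
    HasDerivAt (fun s : ℝ => E A (-s)) (-(E A (-t) * B A)) t := by
  have h := (hasDerivAt_E A (-t)).scomp t (hasDerivAt_neg t)
  exact h.congr_deriv (by simp)

lemma E_mul_E_neg (A : H →L[ℂ] H) (s : ℝ) : E A s * E A (-s) = 1 := by
  letI : NormedAlgebra ℚ (H →L[ℂ] H) := .restrictScalars ℚ ℂ _
  rw [E, E, ← NormedSpace.exp_add_of_commute]
  · rw [neg_smul, add_neg_cancel, NormedSpace.exp_zero]
  · exact ((Commute.refl (B A)).smul_left s).smul_right (-s)

lemma star_E (A : H →L[ℂ] H) (hA : IsSelfAdjoint A) (s : ℝ) :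
    star (E A s) = E A (-s) := by
  rw [E, E, NormedSpace.star_exp]
  congr 1
  rw [B, star_smul, star_smul, hA.star_eq, Complex.star_def, Complex.conj_I,
    neg_smul, smul_neg, neg_smul, star_trivial]

lemma norm_E_le_one (A : H →L[ℂ] H) (hA : IsSelfAdjoint A) (s : ℝ) :
    ‖E A s‖ ≤ 1 := by
  have h1 : ‖star (E A s) * E A s‖ = ‖E A s‖ * ‖E A s‖ := CStarRing.norm_star_mul_self
  rw [star_E A hA] at h1
  have h2 : E A (-s) * E A s = 1 := by
    have := E_mul_E_neg A (-s); rwa [neg_neg] at this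
  rw [h2] at h1
  have h3 : ‖(1 : H →L[ℂ] H)‖ ≤ 1 := ContinuousLinearMap.norm_id_le
  nlinarith [norm_nonneg (E A s)]


lemma norm_opCos_le_one (A : H →L[ℂ] H) (hA : IsSelfAdjoint A) (s : ℝ) :
    ‖opCos A s‖ ≤ 1 := by
  rw [opCos_eq]
  calc ‖(2 : ℂ)⁻¹ • (E A s + E A (-s))‖ = ‖(2:ℂ)⁻¹‖ * ‖E A s + E A (-s)‖ := norm_smul _ _
    _ ≤ (1/2) * (‖E A s‖ + ‖E A (-s)‖) := by
        rw [show ‖(2:ℂ)⁻¹‖ = 1/2 by simp]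
        gcongr
        exact norm_add_le _ _
    _ ≤ (1/2) * (1 + 1) := by
        gcongr
        · exact norm_E_le_one A hA s
        · exact norm_E_le_one A hA _
    _ = 1 := by norm_num

/-- derivative of the cosine family -/
noncomputable def Cd (A : H →L[ℂ] H) (s : ℝ) : H →L[ℂ] H :=
  (2 : ℂ)⁻¹ • ((E A s - E A (-s)) * B A)

lemma hasDerivAt_opCos (A : H →L[ℂ] H) (t : ℝ) :
    HasDerivAt (opCos A) (Cd A t) t := by
  have h : HasDerivAt (fun s : ℝ => (2 : ℂ)⁻¹ • (E A s + E A (-s)))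
      ((2 : ℂ)⁻¹ • (E A t * B A + -(E A (-t) * B A))) t :=
    ((hasDerivAt_E A t).add (hasDerivAt_E_neg A t)).const_smul ((2 : ℂ)⁻¹)
  have : opCos A = fun s : ℝ => (2 : ℂ)⁻¹ • (E A s + E A (-s)) :=
    funext fun s => opCos_eq A s
  rw [this, Cd]
  convert h using 2
  rw [sub_mul, sub_eq_add_neg]

lemma continuous_opCos (A : H →L[ℂ] H) : Continuous (opCos A) :=
  continuous_iff_continuousAt.2 fun t => (hasDerivAt_opCos A t).continuousAt

lemma hasDerivAt_Cd (A : H →L[ℂ] H) (t : ℝ) :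
    HasDerivAt (Cd A) (((2 : ℂ)⁻¹ • ((E A t + E A (-t)) * B A)) * B A) t := by
  have h : HasDerivAt (fun s : ℝ => (2 : ℂ)⁻¹ • ((E A s - E A (-s)) * B A))
      ((2 : ℂ)⁻¹ • ((E A t * B A - -(E A (-t) * B A)) * B A)) t :=
    (((hasDerivAt_E A t).sub (hasDerivAt_E_neg A t)).mul_const (B A)).const_smul ((2 : ℂ)⁻¹)
  have e : Cd A = fun s : ℝ => (2 : ℂ)⁻¹ • ((E A s - E A (-s)) * B A) := rfl
  rw [e]
  convert h using 1
  rw [smul_mul_assoc]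
  congr 1
  rw [sub_neg_eq_add, ← add_mul]

/-- `S t = ∫₀ᵗ cos (r A) dr`, the "sine over A" family. -/
noncomputable def S (A : H →L[ℂ] H) (t : ℝ) : H →L[ℂ] H :=
  ∫ r in (0 : ℝ)..t, opCos A r

lemma hasDerivAt_S (A : H →L[ℂ] H) (t : ℝ) :
    HasDerivAt (S A) (opCos A t) t :=
  intervalIntegral.integral_hasDerivAt_right
    ((continuous_opCos A).intervalIntegrable _ _)
    ((continuous_opCos A).stronglyMeasurableAtFilter _ _)
    (continuous_opCos A).continuousAt

lemma continuous_S (A : H →L[ℂ] H) : Continuous (S A) :=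
  continuous_iff_continuousAt.2 fun t => (hasDerivAt_S A t).continuousAt

lemma norm_S_le (A : H →L[ℂ] H) (hA : IsSelfAdjoint A) (t : ℝ) :
    ‖S A t‖ ≤ |t| := by
  have := intervalIntegral.norm_integral_le_of_norm_le_const
    (C := 1) (f := opCos A) (a := (0:ℝ)) (b := t)
    (fun x _ => norm_opCos_le_one A hA x)
  simpa [S] using this

lemma commute_A_sq_E (A : H →L[ℂ] H) (s : ℝ) : Commute (A ^ 2) (E A s) :=
  ((((Commute.refl A).pow_left 2).smul_right Complex.I).smul_right s).exp_right

lemma commute_A_sq_opCos (A : H →L[ℂ] H) (s : ℝ) :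
    A ^ 2 * opCos A s = opCos A s * A ^ 2 := by
  rw [opCos_eq, mul_smul_comm, smul_mul_assoc, mul_add, add_mul,
    (commute_A_sq_E A s).eq, (commute_A_sq_E A (-s)).eq]

lemma Cd_eq (A : H →L[ℂ] H) (t : ℝ) : Cd A t = -(S A t * A ^ 2) := by
  have key : ∀ x y : ℝ, (fun r => Cd A r + S A r * A ^ 2) x
      = (fun r => Cd A r + S A r * A ^ 2) y := by
    apply is_const_of_deriv_eq_zero
    · intro r
      exact ((hasDerivAt_Cd A r).add ((hasDerivAt_S A r).mul_const _)).differentiableAt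
    · intro r
      have h : HasDerivAt (fun r => Cd A r + S A r * A ^ 2)
          (((2 : ℂ)⁻¹ • ((E A r + E A (-r)) * B A)) * B A + opCos A r * A ^ 2) r :=
        (hasDerivAt_Cd A r).add ((hasDerivAt_S A r).mul_const _)
      have hval : ((2 : ℂ)⁻¹ • ((E A r + E A (-r)) * B A)) * B A + opCos A r * A ^ 2 = 0 := by
        have hBB : B A * B A = -(A ^ 2) := by
          rw [B, smul_mul_smul_comm, Complex.I_mul_I, neg_smul, one_smul, sq]
        rw [opCos_eq, smul_mul_assoc, smul_mul_assoc, mul_assoc, hBB]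
        rw [mul_neg, smul_neg, neg_add_cancel]
      rw [h.deriv, hval]
  have h0 := key t 0
  have hS0 : S A 0 = 0 := intervalIntegral.integral_same
  have hCd0 : Cd A 0 = 0 := by simp [Cd]
  simp only [hS0, hCd0, zero_mul, add_zero, zero_add] at h0
  exact eq_neg_of_add_eq_zero_left h0


lemma opCos_zero (A : H →L[ℂ] H) : opCos A 0 = 1 := by
  have hE0 : E A 0 = 1 := by
    rw [E, zero_smul, NormedSpace.exp_zero]
  rw [opCos_eq, neg_zero, hE0, ← two_smul ℂ (1 : H →L[ℂ] H), smul_smul]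
  norm_num

lemma Cd_zero (A : H →L[ℂ] H) : Cd A 0 = 0 := by simp [Cd]

lemma hasDerivAt_Cd' (A : H →L[ℂ] H) (t : ℝ) :
    HasDerivAt (Cd A) (-(opCos A t * A ^ 2)) t := by
  rw [show Cd A = fun t => -(S A t * A ^ 2) from funext (Cd_eq A)]
  exact ((hasDerivAt_S A t).mul_const _).neg

lemma comm_opCos_bound_aux (A : H →L[ℂ] H) (hA : IsSelfAdjoint A) (Θ : H →L[ℂ] H)
    (s : ℝ) (hs : 0 ≤ s) :
    ‖Θ * opCos A s - opCos A s * Θ‖ ≤ ‖A ^ 2 * Θ - Θ * A ^ 2‖ * (s ^ 2 / 2) := by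
  set D : H →L[ℂ] H := A ^ 2 * Θ - Θ * A ^ 2 with hD
  set u : ℝ → H →L[ℂ] H := fun r => Θ * opCos A r - opCos A r * Θ with hu_def
  set v : ℝ → H →L[ℂ] H := fun r => Θ * Cd A r - Cd A r * Θ with hv_def
  set G : ℝ → H →L[ℂ] H := fun r => opCos A (s - r) * u r + S A (s - r) * v r with hG_def
  set g : ℝ → H →L[ℂ] H := fun r => S A (s - r) * (D * opCos A r) with hg_def
  have hC' : ∀ r : ℝ, HasDerivAt (fun r : ℝ => opCos A (s - r)) (-Cd A (s - r)) r := by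
    intro r
    have h := (hasDerivAt_opCos A (s - r)).scomp r ((hasDerivAt_id r).const_sub s)
    exact h.congr_deriv (by simp)
  have hS' : ∀ r : ℝ, HasDerivAt (fun r : ℝ => S A (s - r)) (-opCos A (s - r)) r := by
    intro r
    have h := (hasDerivAt_S A (s - r)).scomp r ((hasDerivAt_id r).const_sub s)
    exact h.congr_deriv (by simp)
  have hu : ∀ r : ℝ, HasDerivAt u (v r) r := fun r =>
    ((hasDerivAt_opCos A r).const_mul Θ).sub ((hasDerivAt_opCos A r).mul_const Θ)
  have hv : ∀ r : ℝ, HasDerivAt v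
      (Θ * -(opCos A r * A ^ 2) - -(opCos A r * A ^ 2) * Θ) r := fun r =>
    ((hasDerivAt_Cd' A r).const_mul Θ).sub ((hasDerivAt_Cd' A r).mul_const Θ)
  have hG : ∀ r : ℝ, HasDerivAt G (g r) r := by
    intro r
    have h := ((hC' r).mul (hu r)).add ((hS' r).mul (hv r))
    refine h.congr_deriv (Eq.symm ?_)
    have hc := commute_A_sq_opCos A r
    have hmCd : -Cd A (s - r) = S A (s - r) * A ^ 2 := by
      rw [Cd_eq, neg_neg]
    have hkey : A ^ 2 * u r + (Θ * -(opCos A r * A ^ 2) - -(opCos A r * A ^ 2) * Θ)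
        = D * opCos A r := by
      rw [hu_def, hD]
      rw [← hc]
      noncomm_ring
    calc g r = S A (s - r) * (D * opCos A r) := rfl
      _ = S A (s - r) * (A ^ 2 * u r
            + (Θ * -(opCos A r * A ^ 2) - -(opCos A r * A ^ 2) * Θ)) := by rw [hkey]
      _ = S A (s - r) * A ^ 2 * u r + opCos A (s - r) * v r
            + (-opCos A (s - r) * v r
              + S A (s - r) * (Θ * -(opCos A r * A ^ 2) - -(opCos A r * A ^ 2) * Θ)) := by
          noncomm_ring
      _ = -Cd A (s - r) * u r + opCos A (s - r) * v r
            + (-opCos A (s - r) * v r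
              + S A (s - r) * (Θ * -(opCos A r * A ^ 2) - -(opCos A r * A ^ 2) * Θ)) := by
          rw [hmCd]
  have hgcont : Continuous g := by
    exact ((continuous_S A).comp (continuous_const.sub continuous_id)).mul
      (continuous_const.mul (continuous_opCos A))
  have hFTC : ∫ r in (0:ℝ)..s, g r = G s - G 0 :=
    intervalIntegral.integral_eq_sub_of_hasDerivAt (fun r _ => hG r)
      (hgcont.intervalIntegrable _ _)
  have hGs : G s = u s := by
    rw [hG_def]
    simp only [sub_self, opCos_zero, one_mul]
    rw [show S A 0 = 0 from intervalIntegral.integral_same, zero_mul, add_zero]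
  have hG0 : G 0 = 0 := by
    rw [hG_def]
    simp only [sub_zero]
    rw [hu_def, hv_def]
    simp only [opCos_zero, Cd_zero, mul_one, one_mul, mul_zero, zero_mul, sub_self]
    simp
  have hus : u s = ∫ r in (0:ℝ)..s, g r := by rw [hFTC, hGs, hG0, sub_zero]
  have hDnorm : (0:ℝ) ≤ ‖D‖ := norm_nonneg _
  have hbound : ∀ r ∈ Set.Icc (0:ℝ) s, ‖g r‖ ≤ (s - r) * ‖D‖ := by
    intro r hr
    calc ‖g r‖ ≤ ‖S A (s - r)‖ * ‖D * opCos A r‖ := norm_mul_le _ _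
      _ ≤ |s - r| * (‖D‖ * ‖opCos A r‖) := by
          gcongr
          · exact norm_S_le A hA _
          · exact norm_mul_le _ _
      _ ≤ (s - r) * (‖D‖ * 1) := by
          rw [abs_of_nonneg (by linarith [hr.2])]
          have h1 : ‖opCos A r‖ ≤ 1 := norm_opCos_le_one A hA r
          have h2 : (0:ℝ) ≤ s - r := by linarith [hr.2]
          exact mul_le_mul_of_nonneg_left (mul_le_mul_of_nonneg_left h1 hDnorm) h2
      _ = (s - r) * ‖D‖ := by ring
  have hval : (∫ r in (0:ℝ)..s, (s - r) * ‖D‖) = ‖D‖ * (s ^ 2 / 2) := by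
    rw [intervalIntegral.integral_mul_const]
    rw [intervalIntegral.integral_comp_sub_left (fun x => x) s]
    rw [integral_id]
    ring
  calc ‖u s‖ = ‖∫ r in (0:ℝ)..s, g r‖ := by rw [hus]
    _ ≤ ∫ r in (0:ℝ)..s, ‖g r‖ := intervalIntegral.norm_integral_le_integral_norm hs
    _ ≤ ∫ r in (0:ℝ)..s, (s - r) * ‖D‖ := by
        apply intervalIntegral.integral_mono_on hs
        · exact (hgcont.norm.intervalIntegrable _ _)
        · exact (((continuous_const.sub continuous_id).mul continuous_const).intervalIntegrable _ _)
        · exact hbound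
    _ = ‖D‖ * (s ^ 2 / 2) := hval

lemma comm_opCos_bound (A : H →L[ℂ] H) (hA : IsSelfAdjoint A) (Θ : H →L[ℂ] H) (s : ℝ) :
    ‖Θ * opCos A s - opCos A s * Θ‖ ≤ ‖A ^ 2 * Θ - Θ * A ^ 2‖ * (s ^ 2 / 2) := by
  rcases le_or_gt 0 s with hs | hs
  · exact comm_opCos_bound_aux A hA Θ s hs
  · have h := comm_opCos_bound_aux A hA Θ (-s) (by linarith)
    rw [opCos_neg, neg_pow] at h
    simpa using h

end Stmt7Aux

/-- With `T_ε` built from the cosine family of a bounded self-adjoint operator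
`A`, a Schwartz profile `ψ` and a bounded continuous cutoff `φ` supported in `[-2c, 2c]`, the
commutator with a bounded operator `Θ` satisfies
`‖Θ ∘ T_ε - T_ε ∘ Θ‖ ≤ (1/2) ‖A²Θ - ΘA²‖ (sup |φ|) (∫ σ² |ψ(σ)| dσ) ε²` for `ε ∈ (0,1]`. -/
theorem stmt7 {H : Type*} [NormedAddCommGroup H] [InnerProductSpace ℂ H] [CompleteSpace H]
    (A : H →L[ℂ] H) (hA : IsSelfAdjoint A) (Θ : H →L[ℂ] H)
    (ψ : SchwartzMap ℝ ℂ) (c : ℝ) (hc : 0 < c) (φ : ℝ → ℂ)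
    (hφcont : Continuous φ) (hφbdd : BddAbove (Set.range fun s : ℝ => ‖φ s‖))
    (hφsupp : Function.support φ ⊆ Set.Icc (-(2 * c)) (2 * c)) :
    ∀ ε ∈ Set.Ioc (0 : ℝ) 1,
      ‖Θ * regOp A φ (⇑ψ) ε - regOp A φ (⇑ψ) ε * Θ‖ ≤
        (1 / 2) * ‖A ^ 2 * Θ - Θ * A ^ 2‖ * (⨆ s : ℝ, ‖φ s‖) *
          (∫ σ : ℝ, σ ^ 2 * ‖ψ σ‖) * ε ^ 2 := by
  open Stmt7Aux in
  rintro ε ⟨hε, hε1⟩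
  set D : H →L[ℂ] H := A ^ 2 * Θ - Θ * A ^ 2 with hD
  set Msup : ℝ := ⨆ s : ℝ, ‖φ s‖ with hMsup
  have hφle : ∀ s : ℝ, ‖φ s‖ ≤ Msup := fun s => le_ciSup hφbdd s
  have hMsup0 : (0:ℝ) ≤ Msup := le_trans (norm_nonneg (φ 0)) (hφle 0)
  set F : ℝ → (H →L[ℂ] H) := fun s => (φ s * (ε : ℂ)⁻¹ * ψ (s / ε)) • opCos A s with hF_def
  have hcoef : ∀ s : ℝ, ‖φ s * (ε : ℂ)⁻¹ * ψ (s / ε)‖ = ‖φ s‖ * ε⁻¹ * ‖ψ (s / ε)‖ := by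
    intro s
    rw [norm_mul, norm_mul, norm_inv, Complex.norm_real, Real.norm_eq_abs,
      abs_of_pos hε]
  have hF_cont : Continuous F :=
    ((hφcont.mul continuous_const).mul
      (ψ.continuous.comp (continuous_id.div_const ε))).smul (continuous_opCos A)
  have hψint : Integrable (fun s : ℝ => ψ (s / ε)) :=
    (ψ.integrable).comp_div (ne_of_gt hε)
  have hF_int : Integrable F := by
    apply Integrable.mono' ((hψint.norm.const_mul (Msup * ε⁻¹)))
      hF_cont.aestronglyMeasurable
    refine ae_of_all _ fun s => ?_
    calc ‖F s‖ = ‖φ s * (ε : ℂ)⁻¹ * ψ (s / ε)‖ * ‖opCos A s‖ := norm_smul _ _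
      _ ≤ (‖φ s‖ * ε⁻¹ * ‖ψ (s / ε)‖) * 1 := by
          rw [hcoef]
          exact mul_le_mul_of_nonneg_left (norm_opCos_le_one A hA s)
            (by positivity)
      _ ≤ Msup * ε⁻¹ * ‖ψ (s / ε)‖ := by
          rw [mul_one]
          have := hφle s
          gcongr
      _ = Msup * ε⁻¹ * ‖(fun s : ℝ => ψ (s / ε)) s‖ := rfl
  -- commutator as an integral
  have hcomm : Θ * regOp A φ (⇑ψ) ε - regOp A φ (⇑ψ) ε * Θ
      = ∫ s : ℝ, (φ s * (ε : ℂ)⁻¹ * ψ (s / ε)) • (Θ * opCos A s - opCos A s * Θ) := by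
    have hL : Θ * regOp A φ (⇑ψ) ε = ∫ s : ℝ, Θ * F s := by
      rw [regOp]
      exact ((ContinuousLinearMap.mul ℂ (H →L[ℂ] H) Θ).integral_comp_comm hF_int).symm
    have hR : regOp A φ (⇑ψ) ε * Θ = ∫ s : ℝ, F s * Θ := by
      rw [regOp]
      exact (((ContinuousLinearMap.mul ℂ (H →L[ℂ] H)).flip Θ).integral_comp_comm hF_int).symm
    have hint1 : Integrable (fun s : ℝ => Θ * F s) :=
      (ContinuousLinearMap.mul ℂ (H →L[ℂ] H) Θ).integrable_comp hF_int
    have hint2 : Integrable (fun s : ℝ => F s * Θ) :=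
      ((ContinuousLinearMap.mul ℂ (H →L[ℂ] H)).flip Θ).integrable_comp hF_int
    rw [hL, hR, ← integral_sub hint1 hint2]
    congr 1
    funext s
    rw [hF_def]
    simp only [mul_smul_comm, smul_mul_assoc, smul_sub]
  -- the scaled second moment
  have hI2 : Integrable (fun σ : ℝ => σ ^ 2 * ‖ψ σ‖) := by
    have := ψ.integrable_pow_mul (μ := volume) 2
    simpa [Real.norm_eq_abs, sq_abs] using this
  set I : ℝ := ∫ σ : ℝ, σ ^ 2 * ‖ψ σ‖ with hI
  have hI0 : (0:ℝ) ≤ I := integral_nonneg fun σ => by positivity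
  have hk_eq : ∀ s : ℝ, (fun σ : ℝ => (ε * σ) ^ 2 * ‖ψ σ‖) (s / ε) = s ^ 2 * ‖ψ (s / ε)‖ := by
    intro s
    show (ε * (s / ε)) ^ 2 * ‖ψ (s / ε)‖ = s ^ 2 * ‖ψ (s / ε)‖
    have : ε * (s / ε) = s := by field_simp
    rw [this]
  have hmoment : (∫ s : ℝ, s ^ 2 * ‖ψ (s / ε)‖) = ε ^ 3 * I := by
    have h1 : (∫ s : ℝ, s ^ 2 * ‖ψ (s / ε)‖)
        = ∫ s : ℝ, (fun σ : ℝ => (ε * σ) ^ 2 * ‖ψ σ‖) (s / ε) := by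
      congr 1; funext s; exact (hk_eq s).symm
    rw [h1, MeasureTheory.Measure.integral_comp_div (fun σ : ℝ => (ε * σ) ^ 2 * ‖ψ σ‖) ε]
    have h2 : (∫ σ : ℝ, (ε * σ) ^ 2 * ‖ψ σ‖) = ε ^ 2 * I := by
      rw [hI, ← integral_const_mul]
      congr 1; funext σ; ring
    rw [h2, smul_eq_mul, abs_of_pos hε]
    ring
  have hmom_int : Integrable (fun s : ℝ => s ^ 2 * ‖ψ (s / ε)‖) := by
    have h3 : Integrable (fun σ : ℝ => (ε * σ) ^ 2 * ‖ψ σ‖) := by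
      have heq : (fun σ : ℝ => (ε * σ) ^ 2 * ‖ψ σ‖)
          = fun σ : ℝ => ε ^ 2 * (σ ^ 2 * ‖ψ σ‖) := by
        funext σ; ring
      rw [heq]
      exact hI2.const_mul _
    have h4 := h3.comp_div (ne_of_gt hε)
    exact h4.congr (ae_of_all _ fun s => hk_eq s)
  -- final estimate
  have hfinal : ‖∫ s : ℝ, (φ s * (ε : ℂ)⁻¹ * ψ (s / ε)) • (Θ * opCos A s - opCos A s * Θ)‖
      ≤ (Msup * ε⁻¹ * (‖D‖ / 2)) * ∫ s : ℝ, s ^ 2 * ‖ψ (s / ε)‖ := by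
    rw [← integral_const_mul]
    apply norm_integral_le_of_norm_le (hmom_int.const_mul _)
    refine ae_of_all _ fun s => ?_
    calc ‖(φ s * (ε : ℂ)⁻¹ * ψ (s / ε)) • (Θ * opCos A s - opCos A s * Θ)‖
        = ‖φ s * (ε : ℂ)⁻¹ * ψ (s / ε)‖ * ‖Θ * opCos A s - opCos A s * Θ‖ := norm_smul _ _
      _ ≤ (Msup * ε⁻¹ * ‖ψ (s / ε)‖) * (‖D‖ * (s ^ 2 / 2)) := by
          rw [hcoef]
          apply mul_le_mul
          · have := hφle s; gcongr
          · exact comm_opCos_bound A hA Θ s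
          · exact norm_nonneg _
          · positivity
      _ = Msup * ε⁻¹ * (‖D‖ / 2) * (s ^ 2 * ‖ψ (s / ε)‖) := by ring
  rw [hcomm]
  calc ‖∫ s : ℝ, (φ s * (ε : ℂ)⁻¹ * ψ (s / ε)) • (Θ * opCos A s - opCos A s * Θ)‖
      ≤ (Msup * ε⁻¹ * (‖D‖ / 2)) * (ε ^ 3 * I) := by rw [← hmoment]; exact hfinal
    _ = (1 / 2) * ‖D‖ * Msup * I * ε ^ 2 := by
        field_simp
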